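/- For every integer Δ ≥ 1 there exists a constant a(Δ) > 0, depending only on Δ, such that for every simple graph 𝒢 with maximum degree at most Δ, every vertex v of 𝒢, and every integer k ≥ 1, the number of subsets W ⊆ V(𝒢) with |W| = k, v ∈ W, and W inducing a connected subgraph of 𝒢, is at most a(Δ)^k. -/

import Mathlib

open scoped BigOperators

section Aux

variable {V : Type} (G : SimpleGraph V)

/-- `a` and `b` are joined by a walk whose support stays inside `S`. -/
def Reach (S : Set V) (a b : V) : Prop :=
  ∃ p : G.Walk a b, ∀ x ∈ p.support, x ∈ S

variable {G}

lemma Reach.refl {S : Set V} {a : V} (ha : a ∈ S) : Reach G S a a :=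
  ⟨SimpleGraph.Walk.nil, by simp [ha]⟩

lemma Reach.symm {S : Set V} {a b : V} (h : Reach G S a b) : Reach G S b a := by
  obtain ⟨p, hp⟩ := h
  exact ⟨p.reverse, by simpa using hp⟩

lemma Reach.trans {S : Set V} {a b c : V} (h : Reach G S a b) (h' : Reach G S b c) :
    Reach G S a c := by
  obtain ⟨p, hp⟩ := h
  obtain ⟨q, hq⟩ := h'
  refine ⟨p.append q, fun x hx => ?_⟩
  rcases (SimpleGraph.Walk.mem_support_append_iff _ _).1 hx with h | h
  · exact hp x h
  · exact hq x h

lemma Reach.mono {S T : Set V} {a b : V} (hST : S ⊆ T) (h : Reach G S a b) :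
    Reach G T a b := by
  obtain ⟨p, hp⟩ := h
  exact ⟨p, fun x hx => hST (hp x hx)⟩

lemma reach_of_induce_connected {S : Set V} (h : (G.induce S).Connected)
    {a b : V} (ha : a ∈ S) (hb : b ∈ S) : Reach G S a b := by
  obtain ⟨p⟩ := h.preconnected ⟨a, ha⟩ ⟨b, hb⟩
  refine ⟨p.map ⟨Subtype.val, fun {x y} hxy => hxy⟩, fun x hx => ?_⟩
  rw [SimpleGraph.Walk.support_map, List.mem_map] at hx
  obtain ⟨⟨y, hy⟩, -, rfl⟩ := hx
  exact hy

/-- Existence of a closed tour visiting exactly the vertices of a connected finite set. -/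
lemma tour_exists : ∀ (k : ℕ) (S : Finset V) (v : V), v ∈ S → S.card ≤ k →
    (∀ a ∈ S, ∀ b ∈ S, Reach G (S : Set V) a b) →
    ∃ p : G.Walk v v, (∀ x, x ∈ p.support ↔ x ∈ S) ∧ p.length + 2 ≤ 2 * S.card := by
  intro k
  induction k with
  | zero =>
    intro S v hv hcard _
    have : 0 < S.card := Finset.card_pos.2 ⟨v, hv⟩
    omega
  | succ k ih =>
    intro S v hv hcard hconn
    classical
    by_cases hsing : ∀ w ∈ S, w = v
    · -- S = {v}
      have hS : S = {v} := by
        apply Finset.eq_singleton_iff_unique_mem.2 ⟨hv, hsing⟩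
      refine ⟨SimpleGraph.Walk.nil, ?_, ?_⟩
      · intro x; simp [hS]
      · simp [hS]
    · push_neg at hsing
      obtain ⟨u₀, hu₀S, hu₀v⟩ := hsing
      -- find a neighbour u of v inside S
      obtain ⟨p₀, hp₀⟩ := hconn v hv u₀ hu₀S
      obtain ⟨u, hadj, q₀, rfl, hq₀⟩ : ∃ (u : V) (hadj : G.Adj v u) (q₀ : G.Walk u u₀),
          p₀ = SimpleGraph.Walk.cons hadj q₀ ∧ u ∈ S := by
        cases p₀ with
        | nil => exact absurd rfl hu₀v.symm
        | cons hadj q₀ =>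
          refine ⟨_, hadj, q₀, rfl, ?_⟩
          exact hp₀ _ (by simp [SimpleGraph.Walk.support_cons])
      have huv : u ≠ v := (G.ne_of_adj hadj).symm
      -- the component of u inside S \ {v}
      set C : Finset V := S.filter (fun w => w ≠ v ∧ Reach G ((S : Set V) \ {v}) u w) with hC
      have hmemC : ∀ w, w ∈ C ↔ (w ∈ S ∧ w ≠ v ∧ Reach G ((S : Set V) \ {v}) u w) := by
        intro w; simp [hC]
      have huC : u ∈ C := (hmemC u).2 ⟨hq₀, huv, Reach.refl (by simp [hq₀, huv])⟩
      have hvC : v ∉ C := by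
        intro hvmem
        exact ((hmemC v).1 hvmem).2.1 rfl
      have hCS : C ⊆ S := Finset.filter_subset _ _
      -- walks witnessing membership in C stay inside C
      have hwalkC : ∀ w ∈ C, Reach G (C : Set V) u w := by
        intro w hw
        obtain ⟨-, -, q, hq⟩ := (hmemC w).1 hw
        refine ⟨q, fun x hx => ?_⟩
        have hxS : x ∈ (S : Set V) \ {v} := hq x hx
        refine (hmemC x).2 ⟨hxS.1, hxS.2, ?_⟩
        exact ⟨q.takeUntil x hx, fun y hy => hq y (q.support_takeUntil_subset hx hy)⟩
      have hCconn : ∀ a ∈ C, ∀ b ∈ C, Reach G (C : Set V) a b :=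
        fun a ha b hb => (hwalkC a ha).symm.trans (hwalkC b hb)
      have hCcard : C.card ≤ k := by
        have : C ⊆ S.erase v := fun x hx =>
          Finset.mem_erase.2 ⟨((hmemC x).1 hx).2.1, hCS hx⟩
        have h1 := Finset.card_le_card this
        have h2 := Finset.card_erase_of_mem hv
        omega
      obtain ⟨pC, hpCsupp, hpClen⟩ := ih C u huC hCcard hCconn
      -- the rest D = S \ C is connected and contains v
      set D : Finset V := S \ C with hD
      have hvD : v ∈ D := Finset.mem_sdiff.2 ⟨hv, hvC⟩
      have hDv : ∀ w ∈ D, Reach G (D : Set V) w v := by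
        intro w hwD
        obtain ⟨hwS, hwC⟩ := Finset.mem_sdiff.1 hwD
        by_cases hwv : w = v
        · subst hwv; exact Reach.refl (by exact_mod_cast hvD)
        · obtain ⟨q, hq⟩ := hconn w hwS v hv
          have hvq : v ∈ q.support := q.end_mem_support
          set q' := q.takeUntil v hvq with hq'
          have hq'supp : ∀ x ∈ q'.support, x ∈ (S : Set V) :=
            fun x hx => hq x (q.support_takeUntil_subset hvq hx)
          have hcount : q'.support.count v = 1 := q.count_support_takeUntil_eq_one hvq
          refine Reach.symm ⟨q'.reverse, fun x hx => ?_⟩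
          rw [SimpleGraph.Walk.support_reverse, List.mem_reverse] at hx
          have hxS : x ∈ (S : Set V) := hq'supp x hx
          -- show x ∉ C
          have hxC : x ∉ C := by
            by_cases hxv : x = v
            · subst hxv; exact hvC
            · intro hxCmem
              -- build a walk from x to w avoiding v
              have : Reach G ((S : Set V) \ {v}) x w := by
                set t := q'.takeUntil x hx with ht
                set d := q'.dropUntil x hx with hd
                have hvnott : v ∉ t.support := by
                  have hspec : t.append d = q' := q'.take_spec hx
                  have hcount2 : (t.support.count v) + (d.support.tail.count v) = 1 := by
                    rw [← hcount]
                    conv_rhs => rw [← hspec]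
                    rw [SimpleGraph.Walk.support_append, List.count_append]
                  have hvdrop : v ∈ d.support := SimpleGraph.Walk.end_mem_support _
                  have hvtail : v ∈ d.support.tail := by
                    rw [SimpleGraph.Walk.support_eq_cons d] at hvdrop
                    rcases List.mem_cons.1 hvdrop with h | h
                    · exact absurd h.symm hxv
                    · exact h
                  have hc1 := List.count_pos_iff.2 hvtail
                  intro hvt
                  have hc2 := List.count_pos_iff.2 hvt
                  omega
                refine Reach.symm ⟨t, fun y hy => ?_⟩
                refine ⟨hq'supp y (q'.support_takeUntil_subset hx hy), ?_⟩
                intro hyv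
                rw [Set.mem_singleton_iff] at hyv
                subst hyv
                exact hvnott hy
              have hxreach := ((hmemC x).1 hxCmem).2.2
              have : Reach G ((S : Set V) \ {v}) u w := hxreach.trans this
              exact hwC ((hmemC w).2 ⟨hwS, hwv, this⟩)
          exact Finset.mem_sdiff.2 ⟨hxS, hxC⟩
      have hDconn : ∀ a ∈ D, ∀ b ∈ D, Reach G (D : Set V) a b :=
        fun a ha b hb => (hDv a ha).trans (hDv b hb).symm
      have hDcard : D.card ≤ k := by
        have h1 : D.card = S.card - C.card := Finset.card_sdiff_of_subset hCS
        have h2 : 0 < C.card := Finset.card_pos.2 ⟨u, huC⟩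
        omega
      obtain ⟨pD, hpDsupp, hpDlen⟩ := ih D v hvD hDcard hDconn
      -- assemble the tour
      refine ⟨SimpleGraph.Walk.cons hadj (pC.append (SimpleGraph.Walk.cons hadj.symm pD)),
          ?_, ?_⟩
      · intro x
        simp only [SimpleGraph.Walk.support_cons, List.mem_cons,
          SimpleGraph.Walk.mem_support_append_iff]
        constructor
        · rintro (rfl | h | rfl | h)
          · exact hv
          · exact hCS ((hpCsupp x).1 h)
          · exact hq₀
          · exact (Finset.mem_sdiff.1 ((hpDsupp x).1 h)).1
        · intro hxS
          by_cases hxC : x ∈ C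
          · exact Or.inr (Or.inl ((hpCsupp x).2 hxC))
          · exact Or.inr (Or.inr (Or.inr ((hpDsupp x).2 (Finset.mem_sdiff.2 ⟨hxS, hxC⟩))))
      · have hcards : C.card + D.card = S.card := by
          have h1 : D.card = S.card - C.card := Finset.card_sdiff_of_subset hCS
          have h2 := Finset.card_le_card hCS
          omega
        simp only [SimpleGraph.Walk.length_cons, SimpleGraph.Walk.length_append]
        omega

end Aux

lemma finite_card_biUnion {α ι : Type} (s : Finset ι) (f : ι → Set α) (B : ℕ)
    (hf : ∀ i ∈ s, (f i).Finite ∧ (f i).ncard ≤ B) :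
    (⋃ i ∈ s, f i).Finite ∧ (⋃ i ∈ s, f i).ncard ≤ s.card * B := by
  classical
  induction s using Finset.induction_on with
  | empty => simp
  | insert _ _ hnot ih =>
    rename_i a s
    rw [Finset.set_biUnion_insert]
    obtain ⟨h1, h2⟩ := hf a (Finset.mem_insert_self a s)
    obtain ⟨h3, h4⟩ := ih (fun i hi => hf i (Finset.mem_insert_of_mem hi))
    refine ⟨h1.union h3, ?_⟩
    calc ((f a) ∪ ⋃ i ∈ s, f i).ncard ≤ (f a).ncard + (⋃ i ∈ s, f i).ncard :=
          Set.ncard_union_le _ _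
      _ ≤ B + s.card * B := by omega
      _ ≤ (insert a s).card * B := by
          rw [Finset.card_insert_of_notMem hnot]; ring_nf; omega

lemma chain_count {V : Type} (G : SimpleGraph V) (Δ : ℕ)
    (hdeg : ∀ v : V, {u : V | G.Adj v u}.Finite ∧ {u : V | G.Adj v u}.ncard ≤ Δ) :
    ∀ (n : ℕ) (v : V),
      {l : List V | l.length ≤ n ∧ l.head? = some v ∧ l.Chain' G.Adj}.Finite ∧
      {l : List V | l.length ≤ n ∧ l.head? = some v ∧ l.Chain' G.Adj}.ncard ≤ (Δ + 1) ^ n := by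
  intro n
  induction n with
  | zero =>
    intro v
    have hempty : {l : List V | l.length ≤ 0 ∧ l.head? = some v ∧ l.Chain' G.Adj} = ∅ := by
      ext l
      simp only [Set.mem_setOf_eq, Set.mem_empty_iff_false, iff_false, not_and]
      intro hlen
      rw [List.length_eq_zero_iff.1 (Nat.le_zero.1 hlen)]
      simp
    rw [hempty]
    simp
  | succ n ih =>
    intro v
    classical
    set N : Finset V := (hdeg v).1.toFinset with hN
    have hNcard : N.card ≤ Δ := by
      rw [hN, ← Set.ncard_eq_toFinset_card _ (hdeg v).1]
      exact (hdeg v).2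
    have hsub : {l : List V | l.length ≤ n + 1 ∧ l.head? = some v ∧ l.Chain' G.Adj} ⊆
        insert [v] (⋃ u ∈ N, (List.cons v) '' {l : List V | l.length ≤ n ∧ l.head? = some u ∧ l.Chain' G.Adj}) := by
      rintro l ⟨hlen, hhead, hchain⟩
      cases l with
      | nil => simp at hhead
      | cons a t =>
        have ha : a = v := by simpa using hhead
        subst ha
        cases t with
        | nil => exact Set.mem_insert _ _
        | cons u t' =>
          obtain ⟨hadj, hchain'⟩ := List.isChain_cons_cons.1 hchain
          refine Set.mem_insert_of_mem _ ?_
          refine Set.mem_biUnion (show u ∈ N by simp [hN, hadj]) ?_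
          exact ⟨u :: t', ⟨by simpa using hlen, rfl, hchain'⟩, rfl⟩
    obtain ⟨hUfin, hUcard⟩ := finite_card_biUnion N
      (fun u => (List.cons v) '' {l : List V | l.length ≤ n ∧ l.head? = some u ∧ l.Chain' G.Adj})
      ((Δ + 1) ^ n)
      (fun u _ => ⟨(ih u).1.image _, le_trans (Set.ncard_image_le (ih u).1) (ih u).2⟩)
    have hfin := (hUfin.insert ([v])).subset hsub
    refine ⟨hfin, ?_⟩
    have h1 : 1 ≤ (Δ + 1) ^ n := Nat.one_le_pow _ _ (by omega)
    calc {l : List V | l.length ≤ n + 1 ∧ l.head? = some v ∧ l.Chain' G.Adj}.ncard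
        ≤ (insert ([v]) (⋃ u ∈ N, (List.cons v) ''
            {l : List V | l.length ≤ n ∧ l.head? = some u ∧ l.Chain' G.Adj})).ncard :=
          Set.ncard_le_ncard hsub (hUfin.insert _)
      _ ≤ (⋃ u ∈ N, (List.cons v) ''
            {l : List V | l.length ≤ n ∧ l.head? = some u ∧ l.Chain' G.Adj}).ncard + 1 :=
          Set.ncard_insert_le _ _
      _ ≤ N.card * (Δ + 1) ^ n + 1 := by omega
      _ ≤ Δ * (Δ + 1) ^ n + (Δ + 1) ^ n := by
          have := Nat.mul_le_mul_right ((Δ + 1) ^ n) hNcard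
          omega
      _ = (Δ + 1) ^ (n + 1) := by ring

theorem count_connected_subsets (Δ : ℕ) (hΔ : 1 ≤ Δ) :
    ∃ a : ℕ, 0 < a ∧
      ∀ (V : Type) (G : SimpleGraph V),
        (∀ v : V, {u : V | G.Adj v u}.Finite ∧ {u : V | G.Adj v u}.ncard ≤ Δ) →
        ∀ (v : V) (k : ℕ), 1 ≤ k →
          {W : Finset V | W.card = k ∧ v ∈ W ∧ (G.induce (W : Set V)).Connected}.Finite ∧
          {W : Finset V | W.card = k ∧ v ∈ W ∧ (G.induce (W : Set V)).Connected}.ncard ≤ a ^ k := by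
  refine ⟨(Δ + 1) ^ 2, by positivity, ?_⟩
  intro V G hdeg v k hk
  classical
  obtain ⟨hTfin, hTcard⟩ := chain_count G Δ hdeg (2 * k) v
  set F := {W : Finset V | W.card = k ∧ v ∈ W ∧ (G.induce (W : Set V)).Connected} with hF
  set T := {l : List V | l.length ≤ 2 * k ∧ l.head? = some v ∧ l.Chain' G.Adj} with hT
  have hex : ∀ W ∈ F, ∃ p : G.Walk v v,
      (∀ x, x ∈ p.support ↔ x ∈ W) ∧ p.length + 2 ≤ 2 * W.card := by
    rintro W ⟨hcard, hvW, hconn⟩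
    exact tour_exists k W v hvW (le_of_eq hcard)
      (fun a ha b hb => reach_of_induce_connected hconn (by exact_mod_cast ha)
        (by exact_mod_cast hb))
  set f : Finset V → List V := fun W =>
    if h : ∃ p : G.Walk v v, (∀ x, x ∈ p.support ↔ x ∈ W) ∧ p.length + 2 ≤ 2 * W.card
    then (Classical.choose h).support else [] with hf
  have hfT : ∀ W ∈ F, f W ∈ T ∧ (∀ x, x ∈ f W ↔ x ∈ W) := by
    intro W hW
    have h := hex W hW
    obtain ⟨hsupp, hlen⟩ := Classical.choose_spec h
    have hfW : f W = (Classical.choose h).support := by rw [hf]; exact dif_pos h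
    rw [hfW]
    refine ⟨⟨?_, ?_, SimpleGraph.Walk.isChain_adj_support _⟩, hsupp⟩
    · rw [SimpleGraph.Walk.length_support]
      have : W.card = k := hW.1
      omega
    · rw [SimpleGraph.Walk.support_eq_cons]
      rfl
  have hinj : Set.InjOn f F := by
    intro W1 h1 W2 h2 heq
    ext x
    rw [← (hfT W1 h1).2 x, heq, (hfT W2 h2).2 x]
  have hFfin : F.Finite := by
    refine Set.Finite.of_finite_image (hTfin.subset ?_) hinj
    rintro l ⟨W, hW, rfl⟩
    exact (hfT W hW).1
  refine ⟨hFfin, ?_⟩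
  calc F.ncard ≤ T.ncard := Set.ncard_le_ncard_of_injOn f (fun W hW => (hfT W hW).1) hinj hTfin
    _ ≤ (Δ + 1) ^ (2 * k) := hTcard
    _ = ((Δ + 1) ^ 2) ^ k := by rw [← pow_mul]
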